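/- Let s : X → E be a section of a Hermitian vector bundle with |∇''s| ≤ κ|∇′s| pointwise for some κ ∈ (0,1) (κ-quasiholomorphic), and suppose s vanishes transversally. Then at each zero p of s, the image of ∇s(p) : T_pX → E_p is all of E_p and the kernel of ∇s(p) is a symplectic (in particular J-close-to-complex) subspace; concretely, for every v in the kernel of the complex-linear part ∇′s(p), |∇s(p)v| ≤ κ|∇′s(p)v| forces the real-linear map ∇s(p) to be injective on any complex line where ∇′s(p) is injective. -/

import Mathlib

/-- Pointwise structure at a transverse zero of a `κ`-quasiholomorphic section.
At a zero `p` of a section `s` with `|∇″s| ≤ κ|∇′s|`, `κ ∈ (0,1)`, the intrinsic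
derivative `∇s(p) : T_pX → E_p` is modelled by `A = A′ + A″ : ℂⁿ → ℂ` with `A′`
complex-linear (`∇′s(p)`), `A″` antilinear (`∇″s(p)`), `|A″v| ≤ κ|A′v|`;
transversality of the zero means `A` is surjective (`hsurj`).  Conclusion: the
image of `∇s(p)` is all of `E_p`, its kernel is a symplectic subspace of
`(ℂⁿ,ω₀)` (`ω₀(v,w) = Re⟨i·v,w⟩`), and `∇s(p)` is injective on every complex
line on which `∇′s(p)` is injective. -/
theorem quasiholomorphic_transverse_zero_structure (n : ℕ)
    (A' : EuclideanSpace ℂ (Fin n) →ₗ[ℂ] ℂ)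
    (A'' : EuclideanSpace ℂ (Fin n) →ₗ[ℝ] ℂ)
    (hanti : ∀ v, A'' (Complex.I • v) = -(Complex.I * A'' v))
    (κ : ℝ) (hκ : κ ∈ Set.Ioo (0 : ℝ) 1)
    (hbound : ∀ v, ‖A'' v‖ ≤ κ * ‖A' v‖)
    (hsurj : Function.Surjective (fun v : EuclideanSpace ℂ (Fin n) => A' v + A'' v)) :
    (Set.range (fun v : EuclideanSpace ℂ (Fin n) => A' v + A'' v) = Set.univ) ∧
    (∀ v : EuclideanSpace ℂ (Fin n), A' v + A'' v = 0 → v ≠ 0 →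
      ∃ w : EuclideanSpace ℂ (Fin n), A' w + A'' w = 0 ∧
        ((inner ℂ (Complex.I • v) w : ℂ)).re ≠ 0) ∧
    (∀ v : EuclideanSpace ℂ (Fin n), A' v ≠ 0 →
      ∀ c : ℂ, c ≠ 0 → A' (c • v) + A'' (c • v) ≠ 0) := by
  obtain ⟨hκ0, hκ1⟩ := hκ
  -- Key: on the kernel of `A = A' + A''`, the bound forces `A' u = 0`.
  have hker : ∀ u : EuclideanSpace ℂ (Fin n), A' u + A'' u = 0 → A' u = 0 := by
    intro u hu
    have heq : A' u = -(A'' u) := by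
      rw [eq_neg_iff_add_eq_zero]; exact hu
    have habs : ‖A' u‖ = ‖A'' u‖ := by
      rw [heq, norm_neg]
    have h2 := hbound u
    rw [← habs] at h2
    by_contra hne
    have hpos : 0 < ‖A' u‖ := norm_pos_iff.mpr hne
    nlinarith
  refine ⟨Set.range_eq_univ.mpr hsurj, ?_, ?_⟩
  · intro v hv hv0
    have hA' : A' v = 0 := hker v hv
    have hA'' : A'' v = 0 := by
      have := hbound v
      rw [hA'] at this
      simp only [map_zero, norm_zero, mul_zero] at this
      exact norm_eq_zero.mp (le_antisymm this (norm_nonneg _))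
    refine ⟨Complex.I • v, ?_, ?_⟩
    · rw [map_smul, hanti, hA', hA'']
      simp
    · have : (inner ℂ (Complex.I • v) (Complex.I • v) : ℂ) = (‖Complex.I • v‖ : ℂ) ^ 2 :=
        inner_self_eq_norm_sq_to_K _
      rw [this]
      have hn : ‖Complex.I • v‖ = ‖v‖ := by
        rw [norm_smul, Complex.norm_I, one_mul]
      simp only [hn]
      have : ‖v‖ ≠ 0 := norm_ne_zero_iff.mpr hv0
      rw [← Complex.ofReal_pow, Complex.ofReal_re]
      exact pow_ne_zero 2 this
  · intro v hv c hc heq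
    have hA' : A' (c • v) = 0 := hker _ heq
    rw [map_smul, smul_eq_mul, mul_eq_zero] at hA'
    tauto
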